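/- arXiv:1110.0748 — 2 statements merged into one kernel-verified Lean document; each statement's English description precedes it below -/
import Mathlib

section
/- For jointly distributed discrete random variables X, X_r, Y, Y_r, Ŷ_r such that Ŷ_r is conditionally independent of (X, Y) given (X_r, Y_r) (i.e., the joint law factors as p(x)p(x_r)p(ŷ_r|y_r,x_r)p(y,y_r|x,x_r)), the following identity holds: I(X,X_r;Y) + I(Ŷ_r;X,Y|X_r) − I(Ŷ_r;Y_r|X_r) = I(X,X_r;Y) − I(Ŷ_r;Y_r|X,X_r,Y). -/
open scoped BigOperators Classical

/-- Probability that the random variable `X` takes value `a`, under pmf `p` on `Ω`. -/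
noncomputable def jp {Ω A : Type*} [Fintype Ω] (p : Ω → ℝ) (X : Ω → A) (a : A) : ℝ :=
  ∑ ω, if X ω = a then p ω else 0

/-- Conditional mutual information `I(X;Y|Z)` of finite discrete random variables
(natural logarithm). -/
noncomputable def condMI {Ω A B C : Type*} [Fintype Ω] [Fintype A] [Fintype B] [Fintype C]
    (p : Ω → ℝ) (X : Ω → A) (Y : Ω → B) (Z : Ω → C) : ℝ :=
  ∑ a : A, ∑ b : B, ∑ c : C,
    jp p (fun ω => (X ω, Y ω, Z ω)) (a, b, c) *
      Real.log (jp p (fun ω => (X ω, Y ω, Z ω)) (a, b, c) * jp p Z c /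
        (jp p (fun ω => (X ω, Z ω)) (a, c) * jp p (fun ω => (Y ω, Z ω)) (b, c)))

/-- `p` is a probability mass function. -/
def IsPMF {Ω : Type*} [Fintype Ω] (p : Ω → ℝ) : Prop :=
  (∀ ω, 0 ≤ p ω) ∧ ∑ ω, p ω = 1

lemma jp_nonneg {Ω A : Type*} [Fintype Ω] (p : Ω → ℝ) (hp : ∀ ω, 0 ≤ p ω) (X : Ω → A) (a : A) :
    0 ≤ jp p X a :=
  Finset.sum_nonneg fun ω _ => by split <;> simp [hp ω]

lemma jp_comp {Ω V T : Type*} [Fintype Ω] [Fintype V] (p : Ω → ℝ) (W : Ω → V) (π : V → T) (t : T) :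
    jp p (fun ω => π (W ω)) t = ∑ v, if π v = t then jp p W v else 0 := by
  have : ∀ v : V, (if π v = t then jp p W v else 0)
      = ∑ ω, if W ω = v then (if π v = t then p ω else 0) else 0 := by
    intro v; split <;> simp [jp]
  simp only [this]
  rw [Finset.sum_comm]
  refine Finset.sum_congr rfl fun ω _ => ?_
  rw [Finset.sum_ite_eq Finset.univ (W ω) (fun v => if π v = t then p ω else 0)]
  simp

lemma jp_le_marginal {Ω V T : Type*} [Fintype Ω] [Fintype V] (p : Ω → ℝ) (hp : ∀ ω, 0 ≤ p ω)
    (W : Ω → V) (π : V → T) (v : V) :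
    jp p W v ≤ jp p (fun ω => π (W ω)) (π v) := by
  rw [jp_comp p W π (π v)]
  have := Finset.single_le_sum (f := fun v' => if π v' = π v then jp p W v' else 0)
    (fun v' _ => by split <;> simp [jp_nonneg p hp]) (Finset.mem_univ v)
  simpa using this

lemma sum_jp_comp {Ω V T : Type*} [Fintype Ω] [Fintype V] [Fintype T] (p : Ω → ℝ)
    (W : Ω → V) (π : V → T) (φ : T → ℝ) :
    ∑ t, jp p (fun ω => π (W ω)) t * φ t = ∑ v, jp p W v * φ (π v) := by
  have h1 : ∀ t : T, jp p (fun ω => π (W ω)) t * φ t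
      = ∑ ω, if π (W ω) = t then p ω * φ t else 0 := by
    intro t; simp [jp, Finset.sum_mul, ite_mul]
  have h2 : ∀ v : V, jp p W v * φ (π v)
      = ∑ ω, if W ω = v then p ω * φ (π v) else 0 := by
    intro v; simp [jp, Finset.sum_mul, ite_mul]
  simp only [h1, h2]
  rw [Finset.sum_comm, Finset.sum_comm (γ := V)]
  refine Finset.sum_congr rfl fun ω _ => ?_
  rw [Finset.sum_ite_eq Finset.univ (π (W ω)) (fun t => p ω * φ t),
      Finset.sum_ite_eq Finset.univ (W ω) (fun v => p ω * φ (π v))]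
  simp

lemma condMI_comp {Ω V A B C : Type*} [Fintype Ω] [Fintype V] [Fintype A] [Fintype B] [Fintype C]
    (p : Ω → ℝ) (W : Ω → V) (x : V → A) (y : V → B) (z : V → C) :
    condMI p (fun ω => x (W ω)) (fun ω => y (W ω)) (fun ω => z (W ω)) =
      ∑ v, jp p W v *
        Real.log (jp p (fun ω => (x (W ω), y (W ω), z (W ω))) (x v, y v, z v) *
            jp p (fun ω => z (W ω)) (z v) /
          (jp p (fun ω => (x (W ω), z (W ω))) (x v, z v) *
            jp p (fun ω => (y (W ω), z (W ω))) (y v, z v))) := by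
  have := sum_jp_comp p W (fun v => (x v, y v, z v))
    (fun t => Real.log (jp p (fun ω => (x (W ω), y (W ω), z (W ω))) t *
        jp p (fun ω => z (W ω)) t.2.2 /
      (jp p (fun ω => (x (W ω), z (W ω))) (t.1, t.2.2) *
        jp p (fun ω => (y (W ω), z (W ω))) (t.2.1, t.2.2))))
  simp only [Fintype.sum_prod_type] at this
  rw [condMI]
  exact this


/-- if the joint law factors as `p(x)p(xr)p(ŷr|yr,xr)p(y,yr|x,xr)`, then
`I(X,Xr;Y) + I(Yh;X,Y|Xr) − I(Yh;Yr|Xr) = I(X,Xr;Y) − I(Yh;Yr|X,Xr,Y)`. -/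
theorem stmt0 {Ω A Ar B Br Bh : Type*} [Fintype Ω]
    [Fintype A] [Fintype Ar] [Fintype B] [Fintype Br] [Fintype Bh]
    (p : Ω → ℝ) (hp : IsPMF p)
    (X : Ω → A) (Xr : Ω → Ar) (Y : Ω → B) (Yr : Ω → Br) (Yh : Ω → Bh)
    (hfact : ∃ (f : A → ℝ) (fr : Ar → ℝ) (fh : Bh → Br → Ar → ℝ) (fc : B → Br → A → Ar → ℝ),
      ∀ a ar b br h,
        jp p (fun ω => (X ω, Xr ω, Y ω, Yr ω, Yh ω)) (a, ar, b, br, h) =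
          f a * fr ar * fh h br ar * fc b br a ar) :
    condMI p (fun ω => (X ω, Xr ω)) Y (fun _ => (0 : Fin 1)) +
        condMI p Yh (fun ω => (X ω, Y ω)) Xr - condMI p Yh Yr Xr =
      condMI p (fun ω => (X ω, Xr ω)) Y (fun _ => (0 : Fin 1)) -
        condMI p Yh Yr (fun ω => (X ω, Xr ω, Y ω)) := by
  
  obtain ⟨f, fr, fh, fc, hq⟩ := hfact
  set W : Ω → A × Ar × B × Br × Bh := fun ω => (X ω, Xr ω, Y ω, Yr ω, Yh ω) with hW
  have key : condMI p Yh (fun ω => (X ω, Y ω)) Xr +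
      condMI p Yh Yr (fun ω => (X ω, Xr ω, Y ω)) = condMI p Yh Yr Xr := by
    have e2 : condMI p Yh (fun ω => (X ω, Y ω)) Xr =
        ∑ v : A × Ar × B × Br × Bh, jp p W v *
          Real.log (jp p (fun ω => (Yh ω, (X ω, Y ω), Xr ω)) (v.2.2.2.2, (v.1, v.2.2.1), v.2.1) *
              jp p Xr v.2.1 /
            (jp p (fun ω => (Yh ω, Xr ω)) (v.2.2.2.2, v.2.1) *
              jp p (fun ω => ((X ω, Y ω), Xr ω)) ((v.1, v.2.2.1), v.2.1))) :=
      condMI_comp p W (fun v => v.2.2.2.2) (fun v => (v.1, v.2.2.1)) (fun v => v.2.1)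
    have e4 : condMI p Yh Yr (fun ω => (X ω, Xr ω, Y ω)) =
        ∑ v : A × Ar × B × Br × Bh, jp p W v *
          Real.log (jp p (fun ω => (Yh ω, Yr ω, (X ω, Xr ω, Y ω)))
                (v.2.2.2.2, v.2.2.2.1, (v.1, v.2.1, v.2.2.1)) *
              jp p (fun ω => (X ω, Xr ω, Y ω)) (v.1, v.2.1, v.2.2.1) /
            (jp p (fun ω => (Yh ω, (X ω, Xr ω, Y ω))) (v.2.2.2.2, (v.1, v.2.1, v.2.2.1)) *
              jp p (fun ω => (Yr ω, (X ω, Xr ω, Y ω))) (v.2.2.2.1, (v.1, v.2.1, v.2.2.1)))) :=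
      condMI_comp p W (fun v => v.2.2.2.2) (fun v => v.2.2.2.1) (fun v => (v.1, v.2.1, v.2.2.1))
    have e3 : condMI p Yh Yr Xr =
        ∑ v : A × Ar × B × Br × Bh, jp p W v *
          Real.log (jp p (fun ω => (Yh ω, Yr ω, Xr ω)) (v.2.2.2.2, v.2.2.2.1, v.2.1) *
              jp p Xr v.2.1 /
            (jp p (fun ω => (Yh ω, Xr ω)) (v.2.2.2.2, v.2.1) *
              jp p (fun ω => (Yr ω, Xr ω)) (v.2.2.2.1, v.2.1))) :=
      condMI_comp p W (fun v => v.2.2.2.2) (fun v => v.2.2.2.1) (fun v => v.2.1)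
    rw [e2, e4, e3, ← Finset.sum_add_distrib]
    refine Finset.sum_congr rfl fun v _ => ?_
    obtain ⟨a, ar, b, br, h⟩ := v
    dsimp only
    rcases (jp_nonneg p hp.1 W (a, ar, b, br, h)).eq_or_lt with hq0 | hq0
    · rw [← hq0]; ring
    · rw [← mul_add]
      congr 1
      -- positivity of all marginals
      have hm1 : 0 < jp p (fun ω => (Yh ω, (X ω, Y ω), Xr ω)) (h, (a, b), ar) :=
        lt_of_lt_of_le hq0 (jp_le_marginal p hp.1 W
          (fun v => (v.2.2.2.2, (v.1, v.2.2.1), v.2.1)) (a, ar, b, br, h))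
      have hm2 : 0 < jp p Xr ar :=
        lt_of_lt_of_le hq0 (jp_le_marginal p hp.1 W (fun v => v.2.1) (a, ar, b, br, h))
      have hm3 : 0 < jp p (fun ω => (Yh ω, Xr ω)) (h, ar) :=
        lt_of_lt_of_le hq0 (jp_le_marginal p hp.1 W
          (fun v => (v.2.2.2.2, v.2.1)) (a, ar, b, br, h))
      have hm4 : 0 < jp p (fun ω => ((X ω, Y ω), Xr ω)) ((a, b), ar) :=
        lt_of_lt_of_le hq0 (jp_le_marginal p hp.1 W
          (fun v => ((v.1, v.2.2.1), v.2.1)) (a, ar, b, br, h))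
      have hn1 : 0 < jp p (fun ω => (Yh ω, Yr ω, (X ω, Xr ω, Y ω))) (h, br, (a, ar, b)) :=
        lt_of_lt_of_le hq0 (jp_le_marginal p hp.1 W
          (fun v => (v.2.2.2.2, v.2.2.2.1, (v.1, v.2.1, v.2.2.1))) (a, ar, b, br, h))
      have hn2 : 0 < jp p (fun ω => (X ω, Xr ω, Y ω)) (a, ar, b) :=
        lt_of_lt_of_le hq0 (jp_le_marginal p hp.1 W
          (fun v => (v.1, v.2.1, v.2.2.1)) (a, ar, b, br, h))
      have hn3 : 0 < jp p (fun ω => (Yh ω, (X ω, Xr ω, Y ω))) (h, (a, ar, b)) :=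
        lt_of_lt_of_le hq0 (jp_le_marginal p hp.1 W
          (fun v => (v.2.2.2.2, (v.1, v.2.1, v.2.2.1))) (a, ar, b, br, h))
      have hn4 : 0 < jp p (fun ω => (Yr ω, (X ω, Xr ω, Y ω))) (br, (a, ar, b)) :=
        lt_of_lt_of_le hq0 (jp_le_marginal p hp.1 W
          (fun v => (v.2.2.2.1, (v.1, v.2.1, v.2.2.1))) (a, ar, b, br, h))
      have hk1 : 0 < jp p (fun ω => (Yh ω, Yr ω, Xr ω)) (h, br, ar) :=
        lt_of_lt_of_le hq0 (jp_le_marginal p hp.1 W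
          (fun v => (v.2.2.2.2, v.2.2.2.1, v.2.1)) (a, ar, b, br, h))
      have hk4 : 0 < jp p (fun ω => (Yr ω, Xr ω)) (br, ar) :=
        lt_of_lt_of_le hq0 (jp_le_marginal p hp.1 W
          (fun v => (v.2.2.2.1, v.2.1)) (a, ar, b, br, h))
      -- marginal reassociation equalities
      have eq1 : jp p (fun ω => (Yh ω, (X ω, Y ω), Xr ω)) (h, (a, b), ar)
          = jp p (fun ω => (Yh ω, (X ω, Xr ω, Y ω))) (h, (a, ar, b)) := by
        unfold jp
        refine Finset.sum_congr rfl fun ω _ => ?_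
        simp only [show ((Yh ω, (X ω, Y ω), Xr ω) = (h, (a, b), ar)) ↔
          ((Yh ω, (X ω, Xr ω, Y ω)) = (h, (a, ar, b))) from by
            simp only [Prod.ext_iff]; tauto]
        split <;> simp_all
      have eq2 : jp p (fun ω => ((X ω, Y ω), Xr ω)) ((a, b), ar)
          = jp p (fun ω => (X ω, Xr ω, Y ω)) (a, ar, b) := by
        unfold jp
        refine Finset.sum_congr rfl fun ω _ => ?_
        simp only [show (((X ω, Y ω), Xr ω) = ((a, b), ar)) ↔
          ((X ω, Xr ω, Y ω) = (a, ar, b)) from by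
            simp only [Prod.ext_iff]; tauto]
        split <;> simp_all
      have eqn1 : jp p (fun ω => (Yh ω, Yr ω, (X ω, Xr ω, Y ω))) (h, br, (a, ar, b))
          = jp p W (a, ar, b, br, h) := by
        unfold jp
        refine Finset.sum_congr rfl fun ω _ => ?_
        simp only [show ((Yh ω, Yr ω, (X ω, Xr ω, Y ω)) = (h, br, (a, ar, b))) ↔
          (W ω = (a, ar, b, br, h)) from by
            simp only [hW, Prod.ext_iff]; tauto]
        split <;> simp_all
      -- marginal formulas from the factorization
      have hqv : jp p W (a, ar, b, br, h) = f a * fr ar * fh h br ar * fc b br a ar := hq a ar b br h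
      have mk4 : jp p (fun ω => (Yr ω, Xr ω)) (br, ar)
          = ∑ a' : A, ∑ b' : B, ∑ h' : Bh, f a' * fr ar * fh h' br ar * fc b' br a' ar := by
        have := jp_comp p W (fun v => (v.2.2.2.1, v.2.1)) (br, ar)
        rw [show jp p (fun ω => (Yr ω, Xr ω)) (br, ar)
            = jp p (fun ω => ((W ω).2.2.2.1, (W ω).2.1)) (br, ar) from rfl, this]
        simp only [Fintype.sum_prod_type, Prod.mk.injEq, ite_and, hq]
        simp only [Finset.sum_ite_irrel, Finset.sum_ite_eq', Finset.mem_univ, if_true,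
          Finset.sum_const_zero]
      have mk1 : jp p (fun ω => (Yh ω, Yr ω, Xr ω)) (h, br, ar)
          = ∑ a' : A, ∑ b' : B, f a' * fr ar * fh h br ar * fc b' br a' ar := by
        have := jp_comp p W (fun v => (v.2.2.2.2, v.2.2.2.1, v.2.1)) (h, br, ar)
        rw [show jp p (fun ω => (Yh ω, Yr ω, Xr ω)) (h, br, ar)
            = jp p (fun ω => ((W ω).2.2.2.2, (W ω).2.2.2.1, (W ω).2.1)) (h, br, ar) from rfl,
          this]
        simp only [Fintype.sum_prod_type, Prod.mk.injEq, ite_and, hq]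
        simp only [Finset.sum_ite_irrel, Finset.sum_ite_eq', Finset.mem_univ, if_true,
          Finset.sum_const_zero]
      have mn4 : jp p (fun ω => (Yr ω, (X ω, Xr ω, Y ω))) (br, (a, ar, b))
          = ∑ h' : Bh, f a * fr ar * fh h' br ar * fc b br a ar := by
        have := jp_comp p W (fun v => (v.2.2.2.1, (v.1, v.2.1, v.2.2.1))) (br, (a, ar, b))
        rw [show jp p (fun ω => (Yr ω, (X ω, Xr ω, Y ω))) (br, (a, ar, b))
            = jp p (fun ω => ((W ω).2.2.2.1, ((W ω).1, (W ω).2.1, (W ω).2.2.1)))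
              (br, (a, ar, b)) from rfl, this]
        simp only [Fintype.sum_prod_type, Prod.mk.injEq, ite_and, hq]
        simp only [Finset.sum_ite_irrel, Finset.sum_ite_eq', Finset.mem_univ, if_true,
          Finset.sum_const_zero]
      have core : jp p (fun ω => (Yh ω, Yr ω, (X ω, Xr ω, Y ω))) (h, br, (a, ar, b)) *
            jp p (fun ω => (Yr ω, Xr ω)) (br, ar)
          = jp p (fun ω => (Yh ω, Yr ω, Xr ω)) (h, br, ar) *
            jp p (fun ω => (Yr ω, (X ω, Xr ω, Y ω))) (br, (a, ar, b)) := by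
        rw [eqn1, hqv, mk4, mk1, mn4]
        simp only [Finset.mul_sum, Finset.sum_mul]
        conv_rhs => rw [Finset.sum_comm]
        refine Finset.sum_congr rfl fun a' _ => ?_
        rw [Finset.sum_comm]
        refine Finset.sum_congr rfl fun h' _ => ?_
        refine Finset.sum_congr rfl fun b' _ => ?_
        ring
      have lcore := congrArg Real.log core
      rw [Real.log_mul hn1.ne' hk4.ne', Real.log_mul hk1.ne' hn4.ne'] at lcore
      have leq1 := congrArg Real.log eq1
      have leq2 := congrArg Real.log eq2
      rw [Real.log_div (mul_pos hm1 hm2).ne' (mul_pos hm3 hm4).ne',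
        Real.log_mul hm1.ne' hm2.ne', Real.log_mul hm3.ne' hm4.ne',
        Real.log_div (mul_pos hn1 hn2).ne' (mul_pos hn3 hn4).ne',
        Real.log_mul hn1.ne' hn2.ne', Real.log_mul hn3.ne' hn4.ne',
        Real.log_div (mul_pos hk1 hm2).ne' (mul_pos hm3 hk4).ne',
        Real.log_mul hk1.ne' hm2.ne', Real.log_mul hm3.ne' hk4.ne']
      linarith [lcore, leq1, leq2]
  linarith
end

section
/- Let X_1, X_2, X_r, Y_1, Y_r, Ŷ_r be finite discrete random variables satisfying I(X_r; Y_1 | X_1) ≥ I(Ŷ_r; Y_r | X_1, X_r, Y_1) and the identity I(Ŷ_r; Y_r | X_1, X_r, Y_1) = I(Ŷ_r; X_2 | X_1, X_r, Y_1) + I(Ŷ_r; Y_r | X_1, X_2, X_r, Y_1). Then I(X_2; Y_1, Ŷ_r | X_1, X_r) ≤ I(X_2, X_r; Y_1 | X_1) − I(Ŷ_r; Y_r | X_1, X_2, X_r, Y_1). -/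
open scoped BigOperators Classical

lemma jp_congr {Ω A B : Type*} [Fintype Ω] (p : Ω → ℝ) (f : Ω → A) (g : Ω → B) (x : A) (y : B)
    (h : ∀ ω, f ω = x ↔ g ω = y) : jp p f x = jp p g y := by
  unfold jp
  exact Finset.sum_congr rfl fun ω _ => by rw [if_congr (h ω) rfl rfl]

lemma jp_pos {Ω A : Type*} [Fintype Ω] {p : Ω → ℝ} (hp : ∀ ω, 0 ≤ p ω) (f : Ω → A) {ω : Ω}
    (h : 0 < p ω) : 0 < jp p f (f ω) := by
  unfold jp
  have h1 : (if f ω = f ω then p ω else 0) ≤ ∑ ω', if f ω' = f ω then p ω' else 0 :=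
    Finset.single_le_sum (f := fun ω' => if f ω' = f ω then p ω' else 0)
      (fun i _ => by by_cases hfi : f i = f ω <;> simp [hfi, hp i]) (Finset.mem_univ ω)
  simpa using lt_of_lt_of_le (by simpa using h) h1

lemma sum_jp_mul {Ω A : Type*} [Fintype Ω] [Fintype A] (p : Ω → ℝ) (f : Ω → A) (F : A → ℝ) :
    ∑ a, jp p f a * F a = ∑ ω, p ω * F (f ω) := by
  unfold jp
  simp_rw [Finset.sum_mul, ite_mul, zero_mul]
  rw [Finset.sum_comm]
  exact Finset.sum_congr rfl fun ω _ => by simp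

lemma condMI_eq_sum {Ω A B C : Type*} [Fintype Ω] [Fintype A] [Fintype B] [Fintype C]
    (p : Ω → ℝ) (X : Ω → A) (Y : Ω → B) (Z : Ω → C) :
    condMI p X Y Z = ∑ ω, p ω *
      Real.log (jp p (fun ω' => (X ω', Y ω', Z ω')) (X ω, Y ω, Z ω) * jp p Z (Z ω) /
        (jp p (fun ω' => (X ω', Z ω')) (X ω, Z ω) *
          jp p (fun ω' => (Y ω', Z ω')) (Y ω, Z ω))) := by
  unfold condMI
  rw [← sum_jp_mul p (fun ω => (X ω, Y ω, Z ω))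
    (fun x => Real.log (jp p (fun ω => (X ω, Y ω, Z ω)) x * jp p Z x.2.2 /
      (jp p (fun ω => (X ω, Z ω)) (x.1, x.2.2) * jp p (fun ω => (Y ω, Z ω)) (x.2.1, x.2.2))))]
  rw [Fintype.sum_prod_type]
  exact Finset.sum_congr rfl fun a _ => by rw [Fintype.sum_prod_type]

lemma condMI_congr {Ω A B C A' B' C' : Type*} [Fintype Ω] [Fintype A] [Fintype B] [Fintype C]
    [Fintype A'] [Fintype B'] [Fintype C'] (p : Ω → ℝ)
    {X : Ω → A} {Y : Ω → B} {Z : Ω → C} {X' : Ω → A'} {Y' : Ω → B'} {Z' : Ω → C'}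
    (hX : ∀ ω ω', X ω = X ω' ↔ X' ω = X' ω')
    (hY : ∀ ω ω', Y ω = Y ω' ↔ Y' ω = Y' ω')
    (hZ : ∀ ω ω', Z ω = Z ω' ↔ Z' ω = Z' ω') :
    condMI p X Y Z = condMI p X' Y' Z' := by
  rw [condMI_eq_sum, condMI_eq_sum]
  refine Finset.sum_congr rfl fun ω _ => ?_
  rw [jp_congr p (fun ω' => (X ω', Y ω', Z ω')) (fun ω' => (X' ω', Y' ω', Z' ω'))
      (X ω, Y ω, Z ω) (X' ω, Y' ω, Z' ω)
      (fun ω' => by simp only [Prod.ext_iff, hX ω' ω, hY ω' ω, hZ ω' ω]),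
    jp_congr p Z Z' (Z ω) (Z' ω) (fun ω' => hZ ω' ω),
    jp_congr p (fun ω' => (X ω', Z ω')) (fun ω' => (X' ω', Z' ω')) (X ω, Z ω) (X' ω, Z' ω)
      (fun ω' => by simp only [Prod.ext_iff, hX ω' ω, hZ ω' ω]),
    jp_congr p (fun ω' => (Y ω', Z ω')) (fun ω' => (Y' ω', Z' ω')) (Y ω, Z ω) (Y' ω, Z' ω)
      (fun ω' => by simp only [Prod.ext_iff, hY ω' ω, hZ ω' ω])]

lemma condMI_symm {Ω A B C : Type*} [Fintype Ω] [Fintype A] [Fintype B] [Fintype C]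
    (p : Ω → ℝ) (X : Ω → A) (Y : Ω → B) (Z : Ω → C) :
    condMI p X Y Z = condMI p Y X Z := by
  rw [condMI_eq_sum, condMI_eq_sum]
  refine Finset.sum_congr rfl fun ω _ => ?_
  rw [jp_congr p (fun ω' => (X ω', Y ω', Z ω')) (fun ω' => (Y ω', X ω', Z ω'))
      (X ω, Y ω, Z ω) (Y ω, X ω, Z ω) (fun ω' => by simp only [Prod.ext_iff]; try tauto),
    mul_comm (jp p (fun ω' => (X ω', Z ω')) (X ω, Z ω))
      (jp p (fun ω' => (Y ω', Z ω')) (Y ω, Z ω))]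

lemma condMI_chain {Ω A B C D : Type*} [Fintype Ω] [Fintype A] [Fintype B] [Fintype C]
    [Fintype D] {p : Ω → ℝ} (hp : ∀ ω, 0 ≤ p ω)
    (X : Ω → A) (Y : Ω → B) (Z : Ω → C) (W : Ω → D) :
    condMI p X (fun ω => (Y ω, Z ω)) W =
      condMI p X Y W + condMI p X Z (fun ω => (Y ω, W ω)) := by
  rw [condMI_eq_sum, condMI_eq_sum, condMI_eq_sum, ← Finset.sum_add_distrib]
  refine Finset.sum_congr rfl fun ω _ => ?_
  rcases (hp ω).eq_or_lt with h | h
  · simp [← h]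
  · have hXYZW := jp_pos hp (fun ω' => (X ω', Y ω', Z ω', W ω')) h
    have hXYW := jp_pos hp (fun ω' => (X ω', Y ω', W ω')) h
    have hXW := jp_pos hp (fun ω' => (X ω', W ω')) h
    have hYW := jp_pos hp (fun ω' => (Y ω', W ω')) h
    have hYZW := jp_pos hp (fun ω' => (Y ω', Z ω', W ω')) h
    have hW := jp_pos hp W h
    have e1 : jp p (fun ω' => (X ω', (Y ω', Z ω'), W ω')) (X ω, (Y ω, Z ω), W ω)
        = jp p (fun ω' => (X ω', Y ω', Z ω', W ω')) (X ω, Y ω, Z ω, W ω) :=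
      jp_congr _ _ _ _ _ (fun ω' => by simp only [Prod.ext_iff]; try tauto)
    have e2 : jp p (fun ω' => ((Y ω', Z ω'), W ω')) ((Y ω, Z ω), W ω)
        = jp p (fun ω' => (Y ω', Z ω', W ω')) (Y ω, Z ω, W ω) :=
      jp_congr _ _ _ _ _ (fun ω' => by simp only [Prod.ext_iff]; try tauto)
    have e3 : jp p (fun ω' => (X ω', Z ω', (Y ω', W ω'))) (X ω, Z ω, (Y ω, W ω))
        = jp p (fun ω' => (X ω', Y ω', Z ω', W ω')) (X ω, Y ω, Z ω, W ω) :=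
      jp_congr _ _ _ _ _ (fun ω' => by simp only [Prod.ext_iff]; try tauto)
    have e4 : jp p (fun ω' => (X ω', (Y ω', W ω'))) (X ω, (Y ω, W ω))
        = jp p (fun ω' => (X ω', Y ω', W ω')) (X ω, Y ω, W ω) :=
      jp_congr _ _ _ _ _ (fun ω' => by simp only [Prod.ext_iff]; try tauto)
    have e5 : jp p (fun ω' => (Z ω', (Y ω', W ω'))) (Z ω, (Y ω, W ω))
        = jp p (fun ω' => (Y ω', Z ω', W ω')) (Y ω, Z ω, W ω) :=
      jp_congr _ _ _ _ _ (fun ω' => by simp only [Prod.ext_iff]; try tauto)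
    have n1 : jp p (fun ω' => (X ω', Y ω', Z ω', W ω')) (X ω, Y ω, Z ω, W ω) ≠ 0 :=
      ne_of_gt hXYZW
    have n2 : jp p (fun ω' => (X ω', Y ω', W ω')) (X ω, Y ω, W ω) ≠ 0 := ne_of_gt hXYW
    have n3 : jp p (fun ω' => (X ω', W ω')) (X ω, W ω) ≠ 0 := ne_of_gt hXW
    have n4 : jp p (fun ω' => (Y ω', W ω')) (Y ω, W ω) ≠ 0 := ne_of_gt hYW
    have n5 : jp p (fun ω' => (Y ω', Z ω', W ω')) (Y ω, Z ω, W ω) ≠ 0 := ne_of_gt hYZW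
    have n6 : jp p W (W ω) ≠ 0 := ne_of_gt hW
    have key : jp p (fun ω' => (X ω', Y ω', Z ω', W ω')) (X ω, Y ω, Z ω, W ω) * jp p W (W ω) /
          (jp p (fun ω' => (X ω', W ω')) (X ω, W ω) *
            jp p (fun ω' => (Y ω', Z ω', W ω')) (Y ω, Z ω, W ω)) =
        (jp p (fun ω' => (X ω', Y ω', W ω')) (X ω, Y ω, W ω) * jp p W (W ω) /
          (jp p (fun ω' => (X ω', W ω')) (X ω, W ω) *
            jp p (fun ω' => (Y ω', W ω')) (Y ω, W ω))) *
        (jp p (fun ω' => (X ω', Y ω', Z ω', W ω')) (X ω, Y ω, Z ω, W ω) *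
            jp p (fun ω' => (Y ω', W ω')) (Y ω, W ω) /
          (jp p (fun ω' => (X ω', Y ω', W ω')) (X ω, Y ω, W ω) *
            jp p (fun ω' => (Y ω', Z ω', W ω')) (Y ω, Z ω, W ω))) := by
      field_simp
    rw [e1, e2, e3, e4, e5, key,
      Real.log_mul
        (ne_of_gt (div_pos (mul_pos hXYW hW) (mul_pos hXW hYW)))
        (ne_of_gt (div_pos (mul_pos hXYZW hYW) (mul_pos hXYW hYZW))),
      mul_add]

/-- if `I(Xr;Y1|X1) ≥ I(Yh;Yr|X1,Xr,Y1)` and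
`I(Yh;Yr|X1,Xr,Y1) = I(Yh;X2|X1,Xr,Y1) + I(Yh;Yr|X1,X2,Xr,Y1)`, then
`I(X2;Y1,Yh|X1,Xr) ≤ I(X2,Xr;Y1|X1) − I(Yh;Yr|X1,X2,Xr,Y1)`. -/
theorem stmt5 {Ω A1 A2 Ar B1 Br Bh : Type*} [Fintype Ω]
    [Fintype A1] [Fintype A2] [Fintype Ar] [Fintype B1] [Fintype Br] [Fintype Bh]
    (p : Ω → ℝ) (hp : IsPMF p)
    (X1 : Ω → A1) (X2 : Ω → A2) (Xr : Ω → Ar) (Y1 : Ω → B1) (Yr : Ω → Br) (Yh : Ω → Bh)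
    (hconstraint : condMI p Xr Y1 X1 ≥ condMI p Yh Yr (fun ω => (X1 ω, Xr ω, Y1 ω)))
    (hident : condMI p Yh Yr (fun ω => (X1 ω, Xr ω, Y1 ω)) =
      condMI p Yh X2 (fun ω => (X1 ω, Xr ω, Y1 ω)) +
        condMI p Yh Yr (fun ω => (X1 ω, X2 ω, Xr ω, Y1 ω))) :
    condMI p X2 (fun ω => (Y1 ω, Yh ω)) (fun ω => (X1 ω, Xr ω)) ≤
      condMI p (fun ω => (X2 ω, Xr ω)) Y1 X1 -
        condMI p Yh Yr (fun ω => (X1 ω, X2 ω, Xr ω, Y1 ω)) := by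
  obtain ⟨hp0, -⟩ := hp
  have h1 : condMI p X2 (fun ω => (Y1 ω, Yh ω)) (fun ω => (X1 ω, Xr ω)) =
      condMI p X2 Y1 (fun ω => (X1 ω, Xr ω)) +
        condMI p X2 Yh (fun ω => (Y1 ω, X1 ω, Xr ω)) :=
    condMI_chain hp0 X2 Y1 Yh (fun ω => (X1 ω, Xr ω))
  have h2 : condMI p X2 Yh (fun ω => (Y1 ω, X1 ω, Xr ω)) =
      condMI p Yh X2 (fun ω => (X1 ω, Xr ω, Y1 ω)) := by
    rw [condMI_symm]
    exact condMI_congr p (fun _ _ => Iff.rfl) (fun _ _ => Iff.rfl)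
      (fun ω ω' => by simp only [Prod.ext_iff]; tauto)
  have h3 : condMI p (fun ω => (X2 ω, Xr ω)) Y1 X1 =
      condMI p Xr Y1 X1 + condMI p X2 Y1 (fun ω => (X1 ω, Xr ω)) := by
    rw [condMI_symm,
      condMI_congr p (X' := Y1) (Y' := fun ω => (Xr ω, X2 ω)) (Z' := X1)
        (fun _ _ => Iff.rfl)
        (fun ω ω' => by simp only [Prod.ext_iff]; tauto) (fun _ _ => Iff.rfl),
      condMI_chain hp0 Y1 Xr X2 X1, condMI_symm p Y1 Xr X1, condMI_symm p Y1 X2]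
    congr 1
    exact condMI_congr p (fun _ _ => Iff.rfl) (fun _ _ => Iff.rfl)
      (fun ω ω' => by simp only [Prod.ext_iff]; tauto)
  rw [h1, h2, h3]
  linarith
end
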